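/- The radius of convergence of the generating function S(t) = (1+t-√(1-6t+t²))/4 of the super-Catalan numbers is 3 - 2√2, and hence limsup_k (s_k)^{1/k} = 3 + 2√2. -/

import Mathlib

open Filter Finset
open scoped ENNReal NNReal

namespace Stmt9Aux

noncomputable def rr : ℝ := 3 - 2 * Real.sqrt 2
noncomputable def xx : ℝ := 3 + 2 * Real.sqrt 2
noncomputable def yy : ℝ := (1 + rr) / 4

lemma sqrt2_sq : Real.sqrt 2 ^ 2 = 2 := Real.sq_sqrt (by norm_num)
lemma sqrt2_lt : Real.sqrt 2 < 1.5 := by nlinarith [sqrt2_sq, Real.sqrt_nonneg 2]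
lemma sqrt2_gt : 1.4 < Real.sqrt 2 := by nlinarith [sqrt2_sq, Real.sqrt_nonneg 2]
lemma rr_pos : 0 < rr := by unfold rr; nlinarith [sqrt2_lt]
lemma rr_lt : rr < 0.3 := by unfold rr; nlinarith [sqrt2_gt]
lemma xx_gt : 5 < xx := by unfold xx; nlinarith [sqrt2_gt]
lemma xx_lt : xx < 6 := by unfold xx; nlinarith [sqrt2_lt]
lemma rr_quad : rr ^ 2 - 6 * rr + 1 = 0 := by unfold rr; nlinarith [sqrt2_sq]
lemma rr_mul_xx : rr * xx = 1 := by unfold rr xx; nlinarith [sqrt2_sq]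
lemma rr_lt_xx : rr < xx := by nlinarith [rr_lt, xx_gt]
lemma yy_pos : 0 < yy := by unfold yy; nlinarith [rr_pos]
lemma yy_lt_one : yy < 1 := by unfold yy; nlinarith [rr_lt]
lemma rr_le_yy : rr ≤ yy := by unfold yy; nlinarith [rr_lt]
lemma two_yy_sq : 2 * yy ^ 2 = rr := by unfold yy; nlinarith [rr_quad]

/-- Power of a tsum in `ℝ≥0∞` as a sum over tuples. -/
lemma tsum_pow (c : ℕ → ℝ≥0∞) (n : ℕ) :
    (∑' k, c k) ^ n = ∑' f : Fin n → ℕ, ∏ i, c (f i) := by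
  induction n with
  | zero =>
    rw [pow_zero, tsum_eq_single (fun _ => 0) (fun b hb => absurd (funext fun i => i.elim0) hb)]
    simp
  | succ n ih =>
    rw [pow_succ', ih,
      ← Equiv.tsum_eq (Fin.consEquiv (fun _ : Fin (n + 1) => ℕ)) (fun f => ∏ i, c (f i))]
    have h1 : ∀ p : ℕ × (Fin n → ℕ),
        (∏ i, c ((Fin.consEquiv (fun _ : Fin (n + 1) => ℕ)) p i))
          = c p.1 * ∏ i, c (p.2 i) := by
      intro p
      simp [Fin.consEquiv, Fin.prod_univ_succ]
    rw [tsum_congr h1, ENNReal.tsum_prod (f := fun (a : ℕ) (g : Fin n → ℕ) => c a * ∏ i, c (g i))]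
    simp_rw [ENNReal.tsum_mul_left, ENNReal.tsum_mul_right]

lemma tsum_pi (c : ℕ → ℝ≥0∞) (n : ℕ) :
    (∑' f : Fin n → ℕ, ∏ i, c (f i))
      = ∑' k, ∑ f ∈ Finset.Nat.antidiagonalTuple n k, ∏ i, c (f i) := by
  rw [← Equiv.tsum_eq (Finset.Nat.sigmaAntidiagonalTupleEquivTuple n)
      (fun f => ∏ i, c (f i)), ENNReal.tsum_sigma']
  exact tsum_congr fun k => by
    simpa using Finset.tsum_subtype (Finset.Nat.antidiagonalTuple n k) (fun f => ∏ i, c (f i))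

/-- tuples with too many parts contribute zero. -/
lemma vanish {R : Type*} [CommSemiring R] (c : ℕ → R) (hc0 : c 0 = 0) {n k : ℕ}
    (hnk : k < n) :
    ∑ f ∈ Finset.Nat.antidiagonalTuple n k, ∏ i, c (f i) = 0 := by
  refine Finset.sum_eq_zero fun f hf => ?_
  have hfk := Finset.Nat.mem_antidiagonalTuple.mp hf
  obtain ⟨i, hi⟩ : ∃ i, f i = 0 := by
    by_contra hno
    push_neg at hno
    have : n ≤ ∑ i, f i := by
      calc (n : ℕ) = ∑ _i : Fin n, 1 := by simp
        _ ≤ ∑ i, f i := Finset.sum_le_sum fun i _ => Nat.one_le_iff_ne_zero.mpr (hno i)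
    omega
  exact Finset.prod_eq_zero (Finset.mem_univ i) (by rw [hi, hc0])

/-- the coefficient recursion, cast and with `t^k` absorbed. -/
lemma coeff_eq {R : Type*} [CommSemiring R] {s : ℕ → ℕ}
    (hrec : ∀ k, 2 ≤ k → s k = ∑ n ∈ Finset.Icc 2 k,
      ∑ f ∈ Finset.Nat.antidiagonalTuple n k, ∏ i, s (f i))
    (t : R) {k : ℕ} (hk : 2 ≤ k) :
    (s k : R) * t ^ k = ∑ n ∈ Finset.Icc 2 k,
      ∑ f ∈ Finset.Nat.antidiagonalTuple n k, ∏ i, (s (f i) : R) * t ^ (f i) := by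
  have h := hrec k hk
  have h2 : (s k : R) = ∑ n ∈ Finset.Icc 2 k,
      ∑ f ∈ Finset.Nat.antidiagonalTuple n k, ∏ i, (s (f i) : R) := by
    exact_mod_cast congrArg (Nat.cast : ℕ → R) h
  rw [h2, Finset.sum_mul]
  refine Finset.sum_congr rfl fun n hn => ?_
  rw [Finset.sum_mul]
  refine Finset.sum_congr rfl fun f hf => ?_
  have hfk : ∑ i, f i = k := Finset.Nat.mem_antidiagonalTuple.mp hf
  rw [Finset.prod_mul_distrib, Finset.prod_pow_eq_pow_sum, hfk]


lemma shift2 (f : ℕ → ℝ≥0∞) : ∑' k, f k = f 0 + f 1 + ∑' k, f (k + 2) := by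
  rw [← Summable.sum_add_tsum_nat_add' (f := f) (k := 2) ENNReal.summable,
    Finset.sum_range_succ, Finset.sum_range_one]

variable {s : ℕ → ℕ}

lemma main_id (hs0 : s 0 = 0) (hs1 : s 1 = 1)
    (hrec : ∀ k, 2 ≤ k → s k = ∑ n ∈ Finset.Icc 2 k,
      ∑ f ∈ Finset.Nat.antidiagonalTuple n k, ∏ i, s (f i))
    (t : ℝ≥0∞) :
    (∑' k, (s k : ℝ≥0∞) * t ^ k)
      = t + ∑' n : ℕ, (∑' k, (s k : ℝ≥0∞) * t ^ k) ^ (n + 2) := by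
  set c : ℕ → ℝ≥0∞ := fun k => (s k : ℝ≥0∞) * t ^ k with hc
  have hc0 : c 0 = 0 := by simp [hc, hs0]
  have hc1 : c 1 = t := by simp [hc, hs1]
  have hpow : ∀ n, (∑' k, c k) ^ n
      = ∑' k, ∑ f ∈ Finset.Nat.antidiagonalTuple n k, ∏ i, c (f i) := fun n => by
    rw [tsum_pow, tsum_pi]
  have hD : ∀ K, 2 ≤ K → c K
      = ∑' n : ℕ, ∑ f ∈ Finset.Nat.antidiagonalTuple (n + 2) K, ∏ i, c (f i) := by
    intro K hK
    have h1 : c K = ∑ n ∈ Finset.Icc 2 K,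
        ∑ f ∈ Finset.Nat.antidiagonalTuple n K, ∏ i, c (f i) := by
      have := coeff_eq (R := ℝ≥0∞) hrec t hK
      simpa [hc] using this
    have h2 : ∑ n ∈ Finset.Icc 2 K,
        (∑ f ∈ Finset.Nat.antidiagonalTuple n K, ∏ i, c (f i))
        = ∑ n ∈ Finset.range (K - 1),
          ∑ f ∈ Finset.Nat.antidiagonalTuple (n + 2) K, ∏ i, c (f i) := by
      rw [← Finset.Ico_add_one_right_eq_Icc, Finset.sum_Ico_eq_sum_range]
      have h3 : K + 1 - 2 = K - 1 := by omega
      rw [h3]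
      exact Finset.sum_congr rfl fun n _ => by rw [Nat.add_comm 2 n]
    rw [h1, h2]
    refine (tsum_eq_sum fun n hn => ?_).symm
    have : K < n + 2 := by
      simp only [Finset.mem_range] at hn; omega
    exact vanish c hc0 this
  have hD0 : ∀ n : ℕ, ∑ f ∈ Finset.Nat.antidiagonalTuple (n + 2) 0, ∏ i, c (f i) = 0 :=
    fun n => vanish c hc0 (by omega)
  have hD1 : ∀ n : ℕ, ∑ f ∈ Finset.Nat.antidiagonalTuple (n + 2) 1, ∏ i, c (f i) = 0 :=
    fun n => vanish c hc0 (by omega)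
  calc ∑' k, c k = c 0 + c 1 + ∑' k, c (k + 2) := shift2 c
    _ = t + ∑' k, c (k + 2) := by rw [hc0, hc1, zero_add]
    _ = t + ∑' n : ℕ, (∑' k, c k) ^ (n + 2) := by
        congr 1
        calc ∑' k, c (k + 2)
            = ∑' k, ∑' n : ℕ, ∑ f ∈ Finset.Nat.antidiagonalTuple (n + 2) (k + 2),
                ∏ i, c (f i) := tsum_congr fun k => hD (k + 2) (by omega)
          _ = ∑' n : ℕ, ∑' k, ∑ f ∈ Finset.Nat.antidiagonalTuple (n + 2) (k + 2),
                ∏ i, c (f i) := ENNReal.tsum_comm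
          _ = ∑' n : ℕ, ∑' k, ∑ f ∈ Finset.Nat.antidiagonalTuple (n + 2) k,
                ∏ i, c (f i) := by
              refine tsum_congr fun n => ?_
              have h5 := shift2
                (fun k => ∑ f ∈ Finset.Nat.antidiagonalTuple (n + 2) k, ∏ i, c (f i))
              simp only [hD0 n, hD1 n, zero_add] at h5
              exact h5.symm
          _ = ∑' n : ℕ, (∑' k, c k) ^ (n + 2) := tsum_congr fun n => (hpow (n + 2)).symm

lemma diverge (hs0 : s 0 = 0) (hs1 : s 1 = 1)
    (hrec : ∀ k, 2 ≤ k → s k = ∑ n ∈ Finset.Icc 2 k,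
      ∑ f ∈ Finset.Nat.antidiagonalTuple n k, ∏ i, s (f i))
    {t : ℝ} (h1 : rr < t) (h2 : t < xx) :
    (∑' k, (s k : ℝ≥0∞) * (ENNReal.ofReal t) ^ k) = ⊤ := by
  by_contra hG
  set G : ℝ≥0∞ := ∑' k, (s k : ℝ≥0∞) * (ENNReal.ofReal t) ^ k with hGdef
  have hid := main_id hs0 hs1 hrec (ENNReal.ofReal t)
  rw [← hGdef] at hid
  have ht0 : (0:ℝ) < t := lt_trans rr_pos h1
  have hG1 : G < 1 := by
    by_contra hge
    push_neg at hge
    have htop : ∑' n : ℕ, G ^ (n + 2) = ⊤ := by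
      refine top_le_iff.mp ?_
      calc (⊤ : ℝ≥0∞) = ∑' _n : ℕ, (1 : ℝ≥0∞) :=
            (ENNReal.tsum_const_eq_top_of_ne_zero one_ne_zero).symm
        _ ≤ ∑' n : ℕ, G ^ (n + 2) := ENNReal.tsum_le_tsum fun n => one_le_pow₀ hge
    exact hG (by rw [hid, htop, add_top])
  have hgeom : ∑' n : ℕ, G ^ (n + 2) = G ^ 2 * (1 - G)⁻¹ := by
    have h : ∀ n : ℕ, G ^ (n + 2) = G ^ 2 * G ^ n := fun n => by ring
    rw [tsum_congr h, ENNReal.tsum_mul_left, ENNReal.tsum_geometric]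
  rw [hgeom] at hid
  set g : ℝ := G.toReal with hgdef
  have hgnn : 0 ≤ g := ENNReal.toReal_nonneg
  have hg1 : g < 1 := by
    have := (ENNReal.toReal_lt_toReal hG ENNReal.one_ne_top).mpr hG1
    simpa using this
  have hsub : (1 - G) ≠ 0 :=
    fun h => absurd (tsub_eq_zero_iff_le.mp h) (not_le.mpr hG1)
  have hinv_ne_top : (1 - G)⁻¹ ≠ ⊤ := ENNReal.inv_ne_top.mpr hsub
  have hmul_ne_top : G ^ 2 * (1 - G)⁻¹ ≠ ⊤ :=
    ENNReal.mul_ne_top (ENNReal.pow_ne_top hG) hinv_ne_top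
  have hteq : g = t + g ^ 2 * (1 - g)⁻¹ := by
    have h := congrArg ENNReal.toReal hid
    rw [ENNReal.toReal_add (by simp) hmul_ne_top, ENNReal.toReal_mul,
      ENNReal.toReal_inv, ENNReal.toReal_sub_of_le hG1.le ENNReal.one_ne_top,
      ENNReal.toReal_pow, ENNReal.toReal_ofReal ht0.le, ENNReal.toReal_one] at h
    exact h
  have h1g : (0:ℝ) < 1 - g := by linarith
  have hquad : 2 * g ^ 2 - (1 + t) * g + t = 0 := by
    have h' : (g - t) * (1 - g) = g ^ 2 := by
      have h'' : g - t = g ^ 2 * (1 - g)⁻¹ := by linarith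
      rw [h'']
      field_simp
    nlinarith [h']
  have hdisc : t ^ 2 - 6 * t + 1 < 0 := by
    unfold rr at h1; unfold xx at h2
    nlinarith [sqrt2_sq]
  nlinarith [sq_nonneg (4 * g - (1 + t)), hquad, hdisc]


/-- Key combinatorial inequality over the reals. -/
lemma comb_le (c : ℕ → ℝ) (hc0 : c 0 = 0) (hcnn : ∀ j, 0 ≤ c j) (m : ℕ) {n : ℕ}
    (hn : 2 ≤ n) :
    ∑ k ∈ Finset.Icc 2 (m + 1), ∑ f ∈ Finset.Nat.antidiagonalTuple n k, ∏ i, c (f i)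
      ≤ (∑ j ∈ Finset.Icc 1 m, c j) ^ n := by
  classical
  have hrhs : (∑ j ∈ Finset.Icc 1 m, c j) ^ n
      = ∑ g ∈ Fintype.piFinset (fun _ : Fin n => Finset.Icc 1 m), ∏ i, c (g i) := by
    rw [← Finset.prod_univ_sum]
    simp [Finset.prod_const]
  rw [hrhs]
  have hdisj : (↑(Finset.Icc 2 (m + 1) : Finset ℕ) : Set ℕ).PairwiseDisjoint
      (fun k => Finset.Nat.antidiagonalTuple n k) := by
    intro a _ b _ hab
    simp only [Finset.disjoint_left]
    intro f hfa hfb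
    exact hab ((Finset.Nat.mem_antidiagonalTuple.mp hfa).symm.trans
      (Finset.Nat.mem_antidiagonalTuple.mp hfb))
  rw [← Finset.sum_biUnion hdisj]
  set S := (Finset.Icc 2 (m + 1)).biUnion (fun k => Finset.Nat.antidiagonalTuple n k)
  have hgood : ∀ f ∈ S, (∏ i, c (f i)) ≠ 0 → (∀ i, f i ∈ Finset.Icc 1 m) := by
    intro f hfS hne i
    obtain ⟨k, hk, hfk⟩ := Finset.mem_biUnion.mp hfS
    have hkk : 2 ≤ k ∧ k ≤ m + 1 := Finset.mem_Icc.mp hk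
    have hsum : ∑ j, f j = k := Finset.Nat.mem_antidiagonalTuple.mp hfk
    have hfne : ∀ j, c (f j) ≠ 0 := by
      intro j hj
      exact hne (Finset.prod_eq_zero (Finset.mem_univ j) hj)
    have hpos : ∀ j : Fin n, 1 ≤ f j := by
      intro j
      rcases Nat.eq_zero_or_pos (f j) with h | h
      · exact absurd (h ▸ hc0) (hfne j)
      · exact h
    refine Finset.mem_Icc.mpr ⟨hpos i, ?_⟩
    by_contra hgt
    push_neg at hgt
    have h2n : ∃ j : Fin n, j ≠ i := by
      have : 1 < Fintype.card (Fin n) := by rw [Fintype.card_fin]; omega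
      exact Fintype.exists_ne_of_one_lt_card this i
    obtain ⟨j, hji⟩ := h2n
    have hpair : f i + f j ≤ ∑ j', f j' := by
      have : ({i, j} : Finset (Fin n)) ⊆ Finset.univ := Finset.subset_univ _
      calc f i + f j = ∑ j' ∈ ({i, j} : Finset (Fin n)), f j' :=
            (Finset.sum_pair (Ne.symm hji)).symm
        _ ≤ ∑ j', f j' := Finset.sum_le_sum_of_subset this
    have := hpos j
    omega
  calc ∑ f ∈ S, ∏ i, c (f i)
      = ∑ f ∈ S.filter (fun f => ∀ i, f i ∈ Finset.Icc 1 m), ∏ i, c (f i) :=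
        (Finset.sum_filter_of_ne hgood).symm
    _ ≤ ∑ g ∈ Fintype.piFinset (fun _ : Fin n => Finset.Icc 1 m), ∏ i, c (g i) := by
        refine Finset.sum_le_sum_of_subset_of_nonneg ?_ ?_
        · intro f hf
          simp only [Finset.mem_filter] at hf
          exact Fintype.mem_piFinset.mpr hf.2
        · intro f _ _
          exact Finset.prod_nonneg fun i _ => hcnn _

/-- All partial sums of `∑ s_k rr^k` are at most `yy`. -/
lemma partial_le (hs0 : s 0 = 0) (hs1 : s 1 = 1)
    (hrec : ∀ k, 2 ≤ k → s k = ∑ n ∈ Finset.Icc 2 k,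
      ∑ f ∈ Finset.Nat.antidiagonalTuple n k, ∏ i, s (f i)) :
    ∀ m, ∑ k ∈ Finset.range (m + 1), (s k : ℝ) * rr ^ k ≤ yy := by
  set c : ℕ → ℝ := fun k => (s k : ℝ) * rr ^ k with hc
  have hcnn : ∀ j, 0 ≤ c j := fun j => by
    have := rr_pos
    positivity
  have hc0 : c 0 = 0 := by simp [hc, hs0]
  have hc1 : c 1 = rr := by simp [hc, hs1]
  have hIccRange : ∀ m : ℕ, ∑ j ∈ Finset.Icc 1 m, c j = ∑ k ∈ Finset.range (m + 1), c k := by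
    intro m
    rw [Finset.range_eq_Ico, Finset.sum_eq_sum_Ico_succ_bot (by omega : 0 < m + 1), hc0,
      zero_add, ← Finset.Ico_add_one_right_eq_Icc]
  intro m
  induction m with
  | zero => simpa [hc0] using yy_pos.le
  | succ m ih =>
    have hQ : ∑ j ∈ Finset.Icc 1 m, c j ≤ yy := by rw [hIccRange]; exact ih
    have hQnn : 0 ≤ ∑ j ∈ Finset.Icc 1 m, c j := Finset.sum_nonneg fun j _ => hcnn j
    have hIcoIcc : Finset.Ico 2 (m + 1 + 1) = Finset.Icc 2 (m + 1) := Finset.Ico_add_one_right_eq_Icc 2 (m + 1)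
    have hsplit : ∑ k ∈ Finset.range (m + 1 + 1), c k
        = c 0 + c 1 + ∑ k ∈ Finset.Icc 2 (m + 1), c k := by
      rw [Finset.range_eq_Ico, ← Finset.sum_Ico_consecutive (fun k => c k)
        (by omega : 0 ≤ 2) (by omega : 2 ≤ m + 1 + 1), hIcoIcc,
        Finset.sum_eq_sum_Ico_succ_bot (by omega : (0:ℕ) < 2),
        Finset.sum_eq_sum_Ico_succ_bot (by omega : (1:ℕ) < 2)]
      simp [add_assoc]
    have hck : ∀ k ∈ Finset.Icc 2 (m + 1), c k = ∑ n ∈ Finset.Icc 2 k,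
        ∑ f ∈ Finset.Nat.antidiagonalTuple n k, ∏ i, c (f i) := by
      intro k hk
      have h2k : 2 ≤ k := (Finset.mem_Icc.mp hk).1
      simpa [hc] using coeff_eq (R := ℝ) hrec rr h2k
    have hDnn : ∀ n k : ℕ, 0 ≤ ∑ f ∈ Finset.Nat.antidiagonalTuple n k, ∏ i, c (f i) :=
      fun n k => Finset.sum_nonneg fun f _ => Finset.prod_nonneg fun i _ => hcnn _
    have hmid : ∑ k ∈ Finset.Icc 2 (m + 1), c k
        ≤ ∑ n ∈ Finset.Icc 2 (m + 1), (∑ j ∈ Finset.Icc 1 m, c j) ^ n := by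
      calc ∑ k ∈ Finset.Icc 2 (m + 1), c k
          = ∑ k ∈ Finset.Icc 2 (m + 1), ∑ n ∈ Finset.Icc 2 k,
            ∑ f ∈ Finset.Nat.antidiagonalTuple n k, ∏ i, c (f i) :=
            Finset.sum_congr rfl hck
        _ ≤ ∑ k ∈ Finset.Icc 2 (m + 1), ∑ n ∈ Finset.Icc 2 (m + 1),
            ∑ f ∈ Finset.Nat.antidiagonalTuple n k, ∏ i, c (f i) := by
            refine Finset.sum_le_sum fun k hk => ?_
            refine Finset.sum_le_sum_of_subset_of_nonneg ?_ fun n _ _ => hDnn n k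
            exact Finset.Icc_subset_Icc_right (Finset.mem_Icc.mp hk).2
        _ = ∑ n ∈ Finset.Icc 2 (m + 1), ∑ k ∈ Finset.Icc 2 (m + 1),
            ∑ f ∈ Finset.Nat.antidiagonalTuple n k, ∏ i, c (f i) := Finset.sum_comm
        _ ≤ ∑ n ∈ Finset.Icc 2 (m + 1), (∑ j ∈ Finset.Icc 1 m, c j) ^ n := by
            refine Finset.sum_le_sum fun n hn => ?_
            exact comb_le c hc0 hcnn m (Finset.mem_Icc.mp hn).1
    have hgeo : ∑ n ∈ Finset.Icc 2 (m + 1), (∑ j ∈ Finset.Icc 1 m, c j) ^ n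
        ≤ yy ^ 2 * (1 - yy)⁻¹ := by
      calc ∑ n ∈ Finset.Icc 2 (m + 1), (∑ j ∈ Finset.Icc 1 m, c j) ^ n
          ≤ ∑ n ∈ Finset.Icc 2 (m + 1), yy ^ n := by
            refine Finset.sum_le_sum fun n _ => pow_le_pow_left₀ hQnn hQ n
        _ = yy ^ 2 * ∑ i ∈ Finset.range m, yy ^ i := by
            rw [← Finset.Ico_add_one_right_eq_Icc, Finset.sum_Ico_eq_sum_range]
            have h4 : m + 1 + 1 - 2 = m := by omega
            rw [h4, Finset.mul_sum]
            exact Finset.sum_congr rfl fun i _ => by rw [pow_add]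
        _ ≤ yy ^ 2 * (1 - yy)⁻¹ := by
            refine mul_le_mul_of_nonneg_left ?_ (by positivity)

            calc ∑ i ∈ Finset.range m, yy ^ i
                ≤ ∑' i : ℕ, yy ^ i := Summable.sum_le_tsum _ (fun i _ => pow_nonneg yy_pos.le i)
                  (summable_geometric_of_lt_one yy_pos.le yy_lt_one)
              _ = (1 - yy)⁻¹ := tsum_geometric_of_lt_one yy_pos.le yy_lt_one
    have hfix : rr + yy ^ 2 * (1 - yy)⁻¹ = yy := by
      unfold yy
      have h3 : (3:ℝ) - rr ≠ 0 := by nlinarith [rr_lt]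
      have h4 : (1:ℝ) - (1 + rr)/4 = (3 - rr)/4 := by ring
      rw [h4]
      field_simp
      linear_combination (-2 : ℝ) * rr_quad
    calc ∑ k ∈ Finset.range (m + 1 + 1), c k
        = c 0 + c 1 + ∑ k ∈ Finset.Icc 2 (m + 1), c k := hsplit
      _ ≤ 0 + rr + yy ^ 2 * (1 - yy)⁻¹ := by
          rw [hc0, hc1]
          exact add_le_add le_rfl (hmid.trans hgeo)
      _ = yy := by rw [zero_add]; exact hfix

/-- Single-term bound. -/
lemma coeff_le (hs0 : s 0 = 0) (hs1 : s 1 = 1)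
    (hrec : ∀ k, 2 ≤ k → s k = ∑ n ∈ Finset.Icc 2 k,
      ∑ f ∈ Finset.Nat.antidiagonalTuple n k, ∏ i, s (f i)) (k : ℕ) :
    (s k : ℝ) * rr ^ k ≤ yy := by
  have h := partial_le hs0 hs1 hrec k
  refine le_trans ?_ h
  refine Finset.single_le_sum (f := fun k => (s k : ℝ) * rr ^ k) ?_ ?_
  · intro i _
    have := rr_pos
    positivity
  · exact Finset.self_mem_range_succ k


lemma finite_of_summable {s : ℕ → ℕ} {t : ℝ} (ht : 0 ≤ t)
    (h : Summable (fun k => (s k : ℝ) * t ^ k)) :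
    (∑' k, (s k : ℝ≥0∞) * (ENNReal.ofReal t) ^ k) ≠ ⊤ := by
  have heq : (∑' k, (s k : ℝ≥0∞) * (ENNReal.ofReal t) ^ k)
      = ENNReal.ofReal (∑' k, (s k : ℝ) * t ^ k) := by
    rw [ENNReal.ofReal_tsum_of_nonneg (fun k => by positivity) h]
    refine tsum_congr fun k => ?_
    rw [ENNReal.ofReal_mul (by positivity), ENNReal.ofReal_pow ht, ENNReal.ofReal_natCast]
  rw [heq]
  exact ENNReal.ofReal_ne_top

variable (hs0 : s 0 = 0) (hs1 : s 1 = 1)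
    (hrec : ∀ k, 2 ≤ k → s k = ∑ n ∈ Finset.Icc 2 k,
      ∑ f ∈ Finset.Nat.antidiagonalTuple n k, ∏ i, s (f i))

include hs0 hs1 hrec

lemma s_le_pow (k : ℕ) : (s k : ℝ) ≤ xx ^ k := by
  have hrrk : (0:ℝ) < rr ^ k := pow_pos rr_pos k
  have h1 : (s k : ℝ) ≤ yy / rr ^ k :=
    (le_div_iff₀ hrrk).mpr (coeff_le hs0 hs1 hrec k)
  have h2 : yy / rr ^ k ≤ 1 / rr ^ k := by gcongr; exact yy_lt_one.le
  have h3 : (1:ℝ) / rr ^ k = xx ^ k := by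
    rw [eq_comm, eq_div_iff hrrk.ne', ← mul_pow, mul_comm xx rr, rr_mul_xx, one_pow]
  linarith

omit hs0 hs1 hrec in
lemma u_nonneg (k : ℕ) : 0 ≤ (s k : ℝ) ^ ((1 : ℝ) / k) :=
  Real.rpow_nonneg (Nat.cast_nonneg _) _

lemma u_le (k : ℕ) : (s k : ℝ) ^ ((1 : ℝ) / k) ≤ xx := by
  rcases Nat.eq_zero_or_pos k with hk | hk
  · subst hk
    simp only [Nat.cast_zero, div_zero, Real.rpow_zero]
    nlinarith [xx_gt]
  · have hk0 : ((k:ℕ):ℝ) ≠ 0 := Nat.cast_ne_zero.mpr hk.ne'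
    have hxx0 : (0:ℝ) ≤ xx := by nlinarith [xx_gt]
    calc (s k : ℝ) ^ ((1 : ℝ) / k) ≤ (xx ^ k) ^ ((1 : ℝ) / k) :=
          Real.rpow_le_rpow (Nat.cast_nonneg _) (s_le_pow hs0 hs1 hrec k) (by positivity)
      _ = xx := by
          rw [← Real.rpow_natCast xx k, ← Real.rpow_mul hxx0, mul_one_div,
            div_self hk0, Real.rpow_one]

lemma limsup_eq : Filter.limsup (fun k : ℕ => (s k : ℝ) ^ ((1 : ℝ) / k)) Filter.atTop
    = xx := by
  set u : ℕ → ℝ := fun k => (s k : ℝ) ^ ((1 : ℝ) / k) with hu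
  have hub : ∀ k, u k ≤ xx := u_le hs0 hs1 hrec
  have hlb : ∀ k, 0 ≤ u k := u_nonneg
  refine le_antisymm ?_ ?_
  · exact Filter.limsup_le_of_le (Filter.isCoboundedUnder_le_of_le Filter.atTop hlb)
      (Filter.Eventually.of_forall hub)
  · by_contra hlt
    push_neg at hlt
    have hbdd : Filter.IsBoundedUnder (· ≤ ·) Filter.atTop u :=
      Filter.isBoundedUnder_of ⟨xx, hub⟩
    obtain ⟨q, hq1, hq2⟩ := exists_between hlt
    have hev := Filter.eventually_lt_of_limsup_lt hq1 hbdd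
    have hq0 : 0 < q := by
      obtain ⟨k, hk⟩ := hev.exists
      exact lt_of_le_of_lt (hlb k) hk
    have hxx0 : (0:ℝ) < xx := by nlinarith [xx_gt]
    have hqinv : rr < q⁻¹ := by
      have h1 : rr = xx⁻¹ := eq_inv_of_mul_eq_one_left rr_mul_xx
      rw [h1]
      exact inv_strictAnti₀ hq0 hq2
    set t : ℝ := (rr + min xx q⁻¹) / 2 with ht
    have hmin : rr < min xx q⁻¹ := lt_min rr_lt_xx hqinv
    have h5 : rr < t := by rw [ht]; linarith
    have h6 : t < xx := by
      have := min_le_left xx q⁻¹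
      rw [ht]; linarith [rr_lt_xx]
    have h7 : t < q⁻¹ := by
      have := min_le_right xx q⁻¹
      rw [ht]; linarith
    have ht0 : 0 < t := lt_trans rr_pos h5
    have hqt : q * t < 1 := by
      have h8 := mul_lt_mul_of_pos_left h7 hq0
      rwa [mul_inv_cancel₀ hq0.ne'] at h8
    obtain ⟨K, hK⟩ := Filter.eventually_atTop.mp hev
    have hbound : ∀ k, K + 1 ≤ k → (s k : ℝ) * t ^ k ≤ (q * t) ^ k := by
      intro k hk
      have huk := hK k (by omega)
      have hs_le : (s k : ℝ) ≤ q ^ k := by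
        have h8 : (u k) ^ ((k:ℕ):ℝ) = (s k : ℝ) := by
          rw [hu, ← Real.rpow_mul (Nat.cast_nonneg _), one_div,
            inv_mul_cancel₀ (Nat.cast_ne_zero.mpr (by omega : k ≠ 0)), Real.rpow_one]
        calc (s k : ℝ) = (u k) ^ ((k:ℕ):ℝ) := h8.symm
          _ ≤ q ^ ((k:ℕ):ℝ) := Real.rpow_le_rpow (hlb k) huk.le (Nat.cast_nonneg _)
          _ = q ^ k := Real.rpow_natCast q k
      calc (s k : ℝ) * t ^ k ≤ q ^ k * t ^ k :=
            mul_le_mul_of_nonneg_right hs_le (by positivity)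
        _ = (q * t) ^ k := (mul_pow q t k).symm
    have hsummable : Summable (fun k => (s k : ℝ) * t ^ k) := by
      rw [← summable_nat_add_iff (K + 1)]
      have hgeo : Summable (fun k : ℕ => (q * t) ^ (k + (K + 1))) := by
        have := (summable_geometric_of_lt_one (by positivity) hqt).mul_left ((q*t)^(K+1))
        refine this.congr fun k => ?_
        rw [← pow_add, Nat.add_comm]
      refine Summable.of_nonneg_of_le (fun k => by positivity) (fun k => ?_) hgeo
      exact hbound (k + (K + 1)) (by omega)
    exact (finite_of_summable ht0.le hsummable) (diverge hs0 hs1 hrec h5 h6)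

lemma radius_eq :
    (FormalMultilinearSeries.ofScalars ℝ (fun k => (s k : ℝ))).radius
      = ENNReal.ofReal rr := by
  set p := FormalMultilinearSeries.ofScalars ℝ (fun k => (s k : ℝ)) with hp
  have hnorm : ∀ n, ‖p n‖ = (s n : ℝ) := fun n => by
    rw [hp, FormalMultilinearSeries.ofScalars_norm, Real.norm_natCast]
  refine le_antisymm ?_ ?_
  · -- radius ≤ ofReal rr
    by_contra h
    push_neg at h
    obtain ⟨w, hw1, hw2⟩ := ENNReal.lt_iff_exists_nnreal_btwn.mp h
    obtain ⟨C, hC0, hCb⟩ := p.norm_mul_pow_le_of_lt_radius hw2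
    have hwr : rr < (w:ℝ) := by
      rw [← ENNReal.ofReal_coe_nnreal] at hw1
      exact (ENNReal.ofReal_lt_ofReal_iff_of_nonneg rr_pos.le).mp hw1
    have hw0 : (0:ℝ) < (w:ℝ) := lt_trans rr_pos hwr
    set t : ℝ := (rr + min xx (w:ℝ)) / 2 with ht
    have hmin : rr < min xx (w:ℝ) := lt_min rr_lt_xx hwr
    have h5 : rr < t := by rw [ht]; linarith
    have h6 : t < xx := by
      have := min_le_left xx (w:ℝ)
      rw [ht]; linarith [rr_lt_xx]
    have h7 : t < (w:ℝ) := by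
      have := min_le_right xx (w:ℝ)
      rw [ht]; linarith
    have ht0 : 0 < t := lt_trans rr_pos h5
    have hsummable : Summable (fun k => (s k : ℝ) * t ^ k) := by
      have hratio : t / (w:ℝ) < 1 := (div_lt_one hw0).mpr h7
      refine Summable.of_nonneg_of_le (fun k => by positivity) (fun k => ?_)
        ((summable_geometric_of_lt_one (by positivity) hratio).mul_left C)
      have h9 := hCb k
      rw [hnorm k] at h9
      have h10 : (s k : ℝ) ≤ C / (w:ℝ) ^ k := (le_div_iff₀ (pow_pos hw0 k)).mpr h9
      have h11 : C * (t / (w:ℝ)) ^ k = (C / (w:ℝ) ^ k) * t ^ k := by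
        rw [div_pow, div_mul_eq_mul_div, mul_div_assoc]
      calc (s k : ℝ) * t ^ k ≤ (C / (w:ℝ) ^ k) * t ^ k :=
            mul_le_mul_of_nonneg_right h10 (by positivity)
        _ = C * (t / (w:ℝ)) ^ k := h11.symm
    exact (finite_of_summable ht0.le hsummable) (diverge hs0 hs1 hrec h5 h6)
  · -- ofReal rr ≤ radius
    have hofReal : ENNReal.ofReal rr = ((rr.toNNReal : ℝ≥0) : ℝ≥0∞) := rfl
    rw [hofReal]
    refine p.le_radius_of_bound yy fun n => ?_
    rw [hnorm n, Real.coe_toNNReal _ rr_pos.le]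
    exact coeff_le hs0 hs1 hrec n

end Stmt9Aux

/-- The radius of convergence of the super-Catalan generating function is
`3 - 2√2`, hence `limsup s_k^{1/k} = 3 + 2√2`. -/
theorem stmt_9 (s : ℕ → ℕ) (hs0 : s 0 = 0) (hs1 : s 1 = 1)
    (hrec : ∀ k, 2 ≤ k → s k = ∑ n ∈ Finset.Icc 2 k,
      ∑ f ∈ Finset.Nat.antidiagonalTuple n k, ∏ i, s (f i)) :
    (FormalMultilinearSeries.ofScalars ℝ (fun k => (s k : ℝ))).radius
        = ENNReal.ofReal (3 - 2 * Real.sqrt 2) ∧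
    Filter.limsup (fun k : ℕ => (s k : ℝ) ^ ((1 : ℝ) / k)) Filter.atTop
        = 3 + 2 * Real.sqrt 2 := by
  rw [show (3 - 2 * Real.sqrt 2 : ℝ) = Stmt9Aux.rr from rfl,
    show (3 + 2 * Real.sqrt 2 : ℝ) = Stmt9Aux.xx from rfl]
  exact ⟨Stmt9Aux.radius_eq hs0 hs1 hrec, Stmt9Aux.limsup_eq hs0 hs1 hrec⟩
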